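/- Quantum commuting Hamiltonians: with operators satisfying μ_k λ_l = (λ_l + iħ δ_{kl}) μ_k, [λ_k, λ_l] = [μ_k, μ_l] = 0, define for each λ in the center t(λ) = (λ + Σ_i λ_i)∏_i (λ − λ_i) + Σ_i ∏_{j≠i} (λ − λ_j)(λ_i − λ_j)^{-1} (μ_i + μ_i^{-1}), with all μ-factors written to the right. Then the operator coefficients H_j of λ^j in t(λ) pairwise commute: [H_i, H_j] = 0. -/

import Mathlib

open Finset Polynomial

/-- A ring equivalence commutes with `Ring.inverse`. -/
lemma toda_equiv_ringInverse {R : Type*} [CommRing R] (e : R ≃+* R) (r : R) :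
    e (Ring.inverse r) = Ring.inverse (e r) := by
  by_cases h : IsUnit r
  · have h2 : IsUnit (e r) := h.map e
    have h1 : e r * e (Ring.inverse r) = 1 := by
      rw [← map_mul, Ring.mul_inverse_cancel r h, map_one]
    calc e (Ring.inverse r) = (Ring.inverse (e r) * e r) * e (Ring.inverse r) := by
          rw [Ring.inverse_mul_cancel _ h2, one_mul]
      _ = Ring.inverse (e r) * (e r * e (Ring.inverse r)) := by ring
      _ = Ring.inverse (e r) := by rw [h1, mul_one]
  · rw [Ring.inverse_non_unit r h, map_zero, Ring.inverse_non_unit]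
    intro hu
    exact h (by simpa using hu.map e.symm)

/-- Unit relation lifted through two layers of `C`. -/
lemma toda_CCrel {R : Type*} [CommRing R] {r : R} (h : IsUnit r) :
    (C (C r) : Polynomial (Polynomial R)) * C (C (Ring.inverse r)) = 1 := by
  rw [← map_mul, ← map_mul, Ring.mul_inverse_cancel r h, map_one, map_one]

/-- Commuting a constant past a mapped polynomial, given a shift relation. -/
lemma toda_Cmul_comm {R A : Type*} [Semiring R] [Semiring A] (f : R →+* A) (g : R →+* R)
    (m : A) (hm : ∀ r : R, m * f r = f (g r) * m) (p : Polynomial R) :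
    C m * p.map f = (p.map g).map f * C m := by
  ext nn
  simp [coeff_C_mul, coeff_mul_C, coeff_map, hm]

section Struct
variable {R : Type*} [CommRing R] {n : ℕ} (lam : Fin n → R)

noncomputable def todaA : Polynomial R := (X + C (∑ i, lam i)) * ∏ i, (X - C (lam i))
noncomputable def todaC (i : Fin n) : Polynomial R :=
  ∏ j ∈ univ.erase i, ((X - C (lam j)) * C (Ring.inverse (lam i - lam j)))
noncomputable def todaN (i : Fin n) : Polynomial R := ∏ k ∈ univ.erase i, (X - C (lam k))
noncomputable def todaNp (i j : Fin n) : Polynomial R :=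
  ∏ k ∈ (univ.erase i).erase j, (X - C (lam k))
noncomputable def todaE (i j : Fin n) : R :=
  ∏ k ∈ (univ.erase i).erase j, Ring.inverse (lam i - lam k)
noncomputable def todaD0 (i : Fin n) : R := ∏ k ∈ univ.erase i, Ring.inverse (lam i - lam k)
noncomputable def todaDp (dd : R) (i : Fin n) : R :=
  ∏ k ∈ univ.erase i, Ring.inverse (lam i + dd - lam k)

lemma todaNp_symm (i j : Fin n) : todaNp lam i j = todaNp lam j i := by
  rw [todaNp, todaNp, Finset.erase_right_comm]

lemma todaS1 (i : Fin n) : todaC lam i = todaN lam i * C (todaD0 lam i) := by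
  rw [todaC, prod_mul_distrib, ← map_prod, todaN, todaD0]

variable {f : R →+* R} {dd : R} {i : Fin n}
  (hfi : f (lam i) = lam i + dd)
  (hfk : ∀ k, k ≠ i → f (lam k) = lam k)
  (hfinv : ∀ r : R, f (Ring.inverse r) = Ring.inverse (f r))

include hfi hfk hfinv in
lemma todaS2 : (todaC lam i).map f = todaN lam i * C (todaDp lam dd i) := by
  rw [todaC, Polynomial.map_prod]
  rw [Finset.prod_congr rfl (g := fun j => (X - C (lam j)) * C (Ring.inverse (lam i + dd - lam j)))
    (fun j hj => by
      have hji : j ≠ i := (Finset.mem_erase.mp hj).1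
      rw [Polynomial.map_mul, Polynomial.map_sub, map_X, map_C, map_C, hfinv, map_sub,
        hfi, hfk j hji])]
  rw [prod_mul_distrib, ← map_prod, todaN, todaDp]

lemma todaS4 {j : Fin n} (hij : i ≠ j) :
    todaC lam i = (X - C (lam j)) * todaNp lam i j *
      (C (Ring.inverse (lam i - lam j)) * C (todaE lam i j)) := by
  have hj : j ∈ univ.erase i := Finset.mem_erase.mpr ⟨hij.symm, Finset.mem_univ j⟩
  rw [todaC, ← Finset.mul_prod_erase _ _ hj, prod_mul_distrib, ← map_prod, todaNp, todaE]
  ring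

include hfi hfk hfinv in
lemma todaS5 {j : Fin n} (hij : i ≠ j) :
    (todaC lam j).map f = (X - (C (lam i) + C dd)) * todaNp lam i j *
      (C (Ring.inverse (lam j - lam i - dd)) * C (todaE lam j i)) := by
  have hi : i ∈ univ.erase j := Finset.mem_erase.mpr ⟨hij, Finset.mem_univ i⟩
  rw [todaC, Polynomial.map_prod]
  rw [Finset.prod_congr rfl
    (g := fun k => (X - C (f (lam k))) * C (Ring.inverse (lam j - f (lam k))))
    (fun k hk => by
      have hkj : k ≠ j := (Finset.mem_erase.mp hk).1
      rw [Polynomial.map_mul, Polynomial.map_sub, map_X, map_C, map_C, hfinv, map_sub,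
        hfk j hij.symm])]
  rw [← Finset.mul_prod_erase _ _ hi]
  rw [Finset.prod_congr rfl
    (g := fun k => (X - C (lam k)) * C (Ring.inverse (lam j - lam k)))
    (fun k hk => by
      have hki : k ≠ i := (Finset.mem_erase.mp hk).1
      rw [hfk k hki])]
  rw [prod_mul_distrib, ← map_prod, hfi]
  rw [show (∏ k ∈ (univ.erase j).erase i, (X - C (lam k))) = todaNp lam i j by
    rw [todaNp, Finset.erase_right_comm]]
  rw [show (∏ k ∈ (univ.erase j).erase i, Ring.inverse (lam j - lam k)) = todaE lam j i from rfl]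
  rw [C_add, sub_add_eq_sub_sub]
  ring

lemma todaS7 (i : Fin n) : todaA lam = (X + C (∑ k, lam k)) * ((X - C (lam i)) * todaN lam i) := by
  rw [todaA, ← Finset.mul_prod_erase _ _ (Finset.mem_univ i), todaN]

include hfi hfk in
lemma todaS8 (hfS : f (∑ k, lam k) = (∑ k, lam k) + dd) :
    (todaA lam).map f = (X + (C (∑ k, lam k) + C dd)) *
      ((X - (C (lam i) + C dd)) * todaN lam i) := by
  rw [todaA, Polynomial.map_mul, Polynomial.map_add, map_X, map_C, hfS, Polynomial.map_prod]
  rw [Finset.prod_congr rfl (g := fun k => X - C (f (lam k)))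
    (fun k _ => by rw [Polynomial.map_sub, map_X, map_C])]
  rw [← Finset.mul_prod_erase _ _ (Finset.mem_univ i), hfi]
  rw [Finset.prod_congr rfl (g := fun k => X - C (lam k))
    (fun k hk => by rw [hfk k (Finset.mem_erase.mp hk).1])]
  rw [todaN, C_add, C_add]

end Struct
section Ident
variable {R : Type*} [CommRing R] {n : ℕ} (lam : Fin n → R)

/-- The `Y`-copy embedding `R[X] → R[X][Y]`. -/
noncomputable def todaEY : Polynomial R →+* Polynomial (Polynomial R) :=
  mapRingHom (C : R →+* Polynomial R)
/-- The `X`-copy embedding `R[X] → R[X][Y]`. -/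
noncomputable def todaEX : Polynomial R →+* Polynomial (Polynomial R) :=
  (C : Polynomial R →+* Polynomial (Polynomial R))

variable {f : Fin n → R →+* R} {dd : R}
  (hfi : ∀ i, f i (lam i) = lam i + dd)
  (hfk : ∀ i k, k ≠ i → f i (lam k) = lam k)
  (hfinv : ∀ (i) (r : R), f i (Ring.inverse r) = Ring.inverse (f i r))

include hfi hfk hfinv in
/-- Linear group identity. -/
lemma todaWI2 (hfS : ∀ i, f i (∑ k, lam k) = (∑ k, lam k) + dd) (i : Fin n) :
    todaEY (todaA lam) * todaEX (todaC lam i) +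
      todaEY (todaC lam i) * todaEX ((todaA lam).map (f i))
    = todaEX (todaA lam) * todaEY (todaC lam i) +
      todaEX (todaC lam i) * todaEY ((todaA lam).map (f i)) := by
  rw [todaS8 lam (hfi i) (hfk i) (hfS i), todaS7 lam i, todaS1]
  simp only [todaEY, todaEX, coe_mapRingHom, Polynomial.map_mul, Polynomial.map_add,
    Polynomial.map_sub, Polynomial.map_X, Polynomial.map_C, map_mul, map_add, map_sub]
  ring

include hfi hfk hfinv in
/-- Quadratic same-sign group identity. -/
lemma todaWI4 (hu0 : ∀ i j : Fin n, i ≠ j → IsUnit (lam i - lam j))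
    (hud : ∀ i j : Fin n, i ≠ j → IsUnit (lam i - lam j - dd)) (i j : Fin n) :
    todaEY (todaC lam i) * todaEX ((todaC lam j).map (f i)) +
      todaEY (todaC lam j) * todaEX ((todaC lam i).map (f j))
    = todaEX (todaC lam i) * todaEY ((todaC lam j).map (f i)) +
      todaEX (todaC lam j) * todaEY ((todaC lam i).map (f j)) := by
  by_cases hij : i = j
  · subst hij
    rw [todaS2 lam (hfi i) (hfk i) (hfinv i), todaS1]
    simp only [todaEY, todaEX, coe_mapRingHom, Polynomial.map_mul, Polynomial.map_C, map_mul]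
    ring
  · have hji : j ≠ i := Ne.symm hij
    have h1 : ((C (C (lam i)) - C (C (lam j))) : Polynomial (Polynomial R)) *
        C (C (Ring.inverse (lam i - lam j))) = 1 := by
      simpa only [map_sub] using toda_CCrel (hu0 i j hij)
    have h2 : ((C (C (lam j)) - C (C (lam i)) - C (C dd)) : Polynomial (Polynomial R)) *
        C (C (Ring.inverse (lam j - lam i - dd))) = 1 := by
      simpa only [map_sub] using toda_CCrel (hud j i hji)
    have h3 : ((C (C (lam j)) - C (C (lam i))) : Polynomial (Polynomial R)) *
        C (C (Ring.inverse (lam j - lam i))) = 1 := by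
      simpa only [map_sub] using toda_CCrel (hu0 j i hji)
    have h4 : ((C (C (lam i)) - C (C (lam j)) - C (C dd)) : Polynomial (Polynomial R)) *
        C (C (Ring.inverse (lam i - lam j - dd))) = 1 := by
      simpa only [map_sub] using toda_CCrel (hud i j hij)
    rw [todaS5 lam (hfi i) (hfk i) (hfinv i) hij, todaS5 lam (hfi j) (hfk j) (hfinv j) hji,
      todaS4 lam hij, todaS4 lam hji, todaNp_symm lam j i]
    simp only [todaEY, todaEX, coe_mapRingHom, Polynomial.map_mul, Polynomial.map_add,
      Polynomial.map_sub, Polynomial.map_X, Polynomial.map_C, map_mul, map_add, map_sub]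
    linear_combination (C (todaNp lam i j) * Polynomial.map (C : R →+* Polynomial R) (todaNp lam i j) *
        C (C (todaE lam i j)) * C (C (todaE lam j i))) *
      (((C X : Polynomial (Polynomial R)) - X) * C (C (Ring.inverse (lam j - lam i))) * h1
        - ((C X : Polynomial (Polynomial R)) - X) * C (C (Ring.inverse (lam i - lam j))) * h2
        + ((C X : Polynomial (Polynomial R)) - X) * C (C (Ring.inverse (lam i - lam j))) * h3
        - ((C X : Polynomial (Polynomial R)) - X) * C (C (Ring.inverse (lam j - lam i))) * h4)

end Ident
section Ident2
variable {R : Type*} [CommRing R] {n : ℕ} (lam : Fin n → R)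

variable {g : R →+* R} {dd : R} {i : Fin n}
  (hgi : g (lam i) = lam i - dd)
  (hgk : ∀ k, k ≠ i → g (lam k) = lam k)
  (hginv : ∀ r : R, g (Ring.inverse r) = Ring.inverse (g r))

include hgi hgk hginv in
lemma todaS5m {j : Fin n} (hij : i ≠ j) :
    (todaC lam j).map g = (X - (C (lam i) - C dd)) * todaNp lam i j *
      (C (Ring.inverse (lam j - lam i + dd)) * C (todaE lam j i)) := by
  have h := todaS5 lam (dd := -dd) (f := g) (i := i)
    (by rw [hgi, sub_eq_add_neg]) hgk hginv hij
  simpa only [map_neg, sub_neg_eq_add, ← sub_eq_add_neg] using h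

include hgi hgk hginv in
lemma todaS2m : (todaC lam i).map g = todaN lam i * C (todaDp lam (-dd) i) :=
  todaS2 lam (by rw [hgi, sub_eq_add_neg]) hgk hginv

include hgi hgk hginv in
lemma todaS8m (hgS : g (∑ k, lam k) = (∑ k, lam k) - dd) :
    (todaA lam).map g = (X + (C (∑ k, lam k) - C dd)) *
      ((X - (C (lam i) - C dd)) * todaN lam i) := by
  have h := todaS8 lam (dd := -dd) (f := g) (i := i)
    (by rw [hgi, sub_eq_add_neg]) hgk (by rw [hgS, sub_eq_add_neg])
  simpa only [map_neg, ← sub_eq_add_neg] using h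

end Ident2

section Ident3
variable {R : Type*} [CommRing R] {n : ℕ} (lam : Fin n → R)
variable {f g : Fin n → R →+* R} {dd : R}
  (hfi : ∀ i, f i (lam i) = lam i + dd)
  (hfk : ∀ i k, k ≠ i → f i (lam k) = lam k)
  (hfinv : ∀ (i) (r : R), f i (Ring.inverse r) = Ring.inverse (f i r))
  (hgi : ∀ i, g i (lam i) = lam i - dd)
  (hgk : ∀ i k, k ≠ i → g i (lam k) = lam k)
  (hginv : ∀ (i) (r : R), g i (Ring.inverse r) = Ring.inverse (g i r))

include hfi hfk hfinv hgi hgk hginv in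
/-- Quadratic mixed-sign group identity. -/
lemma todaWI5 (hu0 : ∀ i j : Fin n, i ≠ j → IsUnit (lam i - lam j))
    (hum : ∀ i j : Fin n, i ≠ j → IsUnit (lam i - lam j - dd))
    (hup : ∀ i j : Fin n, i ≠ j → IsUnit (lam i - lam j + dd)) (i j : Fin n) :
    todaEY (todaC lam i) * todaEX ((todaC lam j).map (f i)) +
      todaEY (todaC lam j) * todaEX ((todaC lam i).map (g j))
    = todaEX (todaC lam i) * todaEY ((todaC lam j).map (f i)) +
      todaEX (todaC lam j) * todaEY ((todaC lam i).map (g j)) := by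
  by_cases hij : i = j
  · subst hij
    rw [todaS2 lam (hfi i) (hfk i) (hfinv i), todaS2m lam (hgi i) (hgk i) (hginv i), todaS1]
    simp only [todaEY, todaEX, coe_mapRingHom, Polynomial.map_mul, Polynomial.map_C, map_mul]
    ring
  · have hji : j ≠ i := Ne.symm hij
    have h1 : ((C (C (lam i)) - C (C (lam j))) : Polynomial (Polynomial R)) *
        C (C (Ring.inverse (lam i - lam j))) = 1 := by
      simpa only [map_sub] using toda_CCrel (hu0 i j hij)
    have h2 : ((C (C (lam j)) - C (C (lam i)) - C (C dd)) : Polynomial (Polynomial R)) *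
        C (C (Ring.inverse (lam j - lam i - dd))) = 1 := by
      simpa only [map_sub] using toda_CCrel (hum j i hji)
    have h3 : ((C (C (lam j)) - C (C (lam i))) : Polynomial (Polynomial R)) *
        C (C (Ring.inverse (lam j - lam i))) = 1 := by
      simpa only [map_sub] using toda_CCrel (hu0 j i hji)
    have h5 : ((C (C (lam i)) - C (C (lam j)) + C (C dd)) : Polynomial (Polynomial R)) *
        C (C (Ring.inverse (lam i - lam j + dd))) = 1 := by
      simpa only [map_sub, map_add] using toda_CCrel (hup i j hij)
    rw [todaS5 lam (hfi i) (hfk i) (hfinv i) hij, todaS5m lam (hgi j) (hgk j) (hginv j) hji,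
      todaS4 lam hij, todaS4 lam hji, todaNp_symm lam j i]
    simp only [todaEY, todaEX, coe_mapRingHom, Polynomial.map_mul, Polynomial.map_add,
      Polynomial.map_sub, Polynomial.map_X, Polynomial.map_C, map_mul, map_add, map_sub]
    linear_combination (C (todaNp lam i j) * Polynomial.map (C : R →+* Polynomial R) (todaNp lam i j) *
        C (C (todaE lam i j)) * C (C (todaE lam j i))) *
      (((C X : Polynomial (Polynomial R)) - X) * C (C (Ring.inverse (lam j - lam i))) * h1
        - ((C X : Polynomial (Polynomial R)) - X) * C (C (Ring.inverse (lam i - lam j))) * h2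
        + ((C X : Polynomial (Polynomial R)) - X) * C (C (Ring.inverse (lam i - lam j))) * h3
        - ((C X : Polynomial (Polynomial R)) - X) * C (C (Ring.inverse (lam j - lam i))) * h5)

end Ident3
section Expand
variable {R B : Type*} [CommRing R] [Ring B] {n : ℕ}

lemma todaExpand (Ψ : Polynomial (Polynomial R) →+* B)
    (u v : Polynomial R →+* Polynomial (Polynomial R))
    (m mi : Fin n → B) (s si : Fin n → Polynomial R →+* Polynomial R)
    (hcv : ∀ (k : Fin n) (q : Polynomial R), m k * Ψ (v q) = Ψ (v (s k q)) * m k)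
    (hcv' : ∀ (k : Fin n) (q : Polynomial R), mi k * Ψ (v q) = Ψ (v (si k q)) * mi k)
    (a : Polynomial R) (c : Fin n → Polynomial R) :
    (Ψ (u a) + ∑ i, Ψ (u (c i)) * (m i + mi i)) *
      (Ψ (v a) + ∑ j, Ψ (v (c j)) * (m j + mi j))
    = Ψ (u a * v a)
    + ∑ i, Ψ (u a * v (c i) + u (c i) * v (s i a)) * m i
    + ∑ i, Ψ (u a * v (c i) + u (c i) * v (si i a)) * mi i
    + ∑ i, ∑ j, Ψ (u (c i) * v (s i (c j))) * (m i * m j)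
    + ∑ i, ∑ j, Ψ (u (c i) * v (s i (c j))) * (m i * mi j)
    + ∑ i, ∑ j, Ψ (u (c i) * v (si i (c j))) * (mi i * m j)
    + ∑ i, ∑ j, Ψ (u (c i) * v (si i (c j))) * (mi i * mi j) := by
  have key : ∀ (k : Fin n) (p q : Polynomial R) (z : B),
      (Ψ (u p) * (m k + mi k)) * (Ψ (v q) * z)
      = Ψ (u p * v (s k q)) * (m k * z) + Ψ (u p * v (si k q)) * (mi k * z) := by
    intro k p q z
    have A : Ψ (u p) * m k * (Ψ (v q) * z) = Ψ (u p * v (s k q)) * (m k * z) := by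
      rw [mul_assoc, ← mul_assoc (m k) (Ψ (v q)) z, hcv k q, map_mul]
      noncomm_ring
    have Ai : Ψ (u p) * mi k * (Ψ (v q) * z) = Ψ (u p * v (si k q)) * (mi k * z) := by
      rw [mul_assoc, ← mul_assoc (mi k) (Ψ (v q)) z, hcv' k q, map_mul]
      noncomm_ring
    rw [mul_add, add_mul, A, Ai]
  have e11 : Ψ (u a) * Ψ (v a) = Ψ (u a * v a) := (map_mul Ψ _ _).symm
  have e12 : Ψ (u a) * (∑ j, Ψ (v (c j)) * (m j + mi j))
      = (∑ i, Ψ (u a * v (c i)) * m i) + ∑ i, Ψ (u a * v (c i)) * mi i := by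
    rw [Finset.mul_sum, ← Finset.sum_add_distrib]
    refine Finset.sum_congr rfl fun j _ => ?_
    rw [← mul_assoc, ← map_mul, mul_add]
  have e21 : (∑ i, Ψ (u (c i)) * (m i + mi i)) * Ψ (v a)
      = (∑ i, Ψ (u (c i) * v (s i a)) * m i) + ∑ i, Ψ (u (c i) * v (si i a)) * mi i := by
    rw [Finset.sum_mul, ← Finset.sum_add_distrib]
    refine Finset.sum_congr rfl fun i _ => ?_
    have := key i (c i) a 1
    rw [mul_one] at this
    rw [this, mul_one, mul_one]
  have e22 : (∑ i, Ψ (u (c i)) * (m i + mi i)) * (∑ j, Ψ (v (c j)) * (m j + mi j))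
      = (∑ i, ∑ j, Ψ (u (c i) * v (s i (c j))) * (m i * m j))
      + (∑ i, ∑ j, Ψ (u (c i) * v (s i (c j))) * (m i * mi j))
      + ((∑ i, ∑ j, Ψ (u (c i) * v (si i (c j))) * (mi i * m j))
      + ∑ i, ∑ j, Ψ (u (c i) * v (si i (c j))) * (mi i * mi j)) := by
    rw [Finset.sum_mul_sum]
    rw [← Finset.sum_add_distrib, ← Finset.sum_add_distrib, ← Finset.sum_add_distrib]
    refine Finset.sum_congr rfl fun i _ => ?_
    rw [← Finset.sum_add_distrib, ← Finset.sum_add_distrib, ← Finset.sum_add_distrib]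
    refine Finset.sum_congr rfl fun j _ => ?_
    rw [key i (c i) (c j) (m j + mi j), mul_add (m i), mul_add (mi i), mul_add, mul_add]
  have merge1 : ((∑ i, Ψ (u a * v (c i)) * m i) + ∑ i, Ψ (u (c i) * v (s i a)) * m i)
      = ∑ i, Ψ (u a * v (c i) + u (c i) * v (s i a)) * m i := by
    rw [← Finset.sum_add_distrib]
    exact Finset.sum_congr rfl fun i _ => by rw [← add_mul, ← map_add]
  have merge2 : ((∑ i, Ψ (u a * v (c i)) * mi i) + ∑ i, Ψ (u (c i) * v (si i a)) * mi i)
      = ∑ i, Ψ (u a * v (c i) + u (c i) * v (si i a)) * mi i := by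
    rw [← Finset.sum_add_distrib]
    exact Finset.sum_congr rfl fun i _ => by rw [← add_mul, ← map_add]
  rw [add_mul, mul_add, mul_add, e11, e12, e21, e22, ← merge1, ← merge2]
  abel

lemma todaSwap {n : ℕ} (F G : Fin n → Fin n → B) (m : Fin n → Fin n → B)
    (hm : ∀ i j, m i j = m j i) (hFG : ∀ i j, F i j + F j i = G i j + G j i)
    (h2 : IsUnit (2 : B)) :
    ∑ i, ∑ j, F i j * m i j = ∑ i, ∑ j, G i j * m i j := by
  have hsum : ∀ H : Fin n → Fin n → B,
      ((∑ i, ∑ j, H i j * m i j) + ∑ i, ∑ j, H j i * m i j)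
      = ∑ i, ∑ j, (H i j + H j i) * m i j := by
    intro H
    rw [← Finset.sum_add_distrib]
    refine Finset.sum_congr rfl fun i _ => ?_
    rw [← Finset.sum_add_distrib]
    exact Finset.sum_congr rfl fun j _ => by rw [add_mul]
  have swap : ∀ H : Fin n → Fin n → B,
      (∑ i : Fin n, ∑ j : Fin n, H j i * m i j) = ∑ i, ∑ j, H i j * m i j := by
    intro H
    rw [Finset.sum_comm]
    exact Finset.sum_congr rfl fun i _ => Finset.sum_congr rfl fun j _ => by rw [hm]
  refine h2.mul_left_cancel ?_
  rw [two_mul, two_mul]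
  calc (∑ i, ∑ j, F i j * m i j) + ∑ i, ∑ j, F i j * m i j
      = (∑ i, ∑ j, F i j * m i j) + ∑ i, ∑ j, F j i * m i j := by rw [swap]
    _ = ∑ i, ∑ j, (F i j + F j i) * m i j := hsum F
    _ = ∑ i, ∑ j, (G i j + G j i) * m i j :=
        Finset.sum_congr rfl fun i _ => Finset.sum_congr rfl fun j _ => by rw [hFG]
    _ = (∑ i, ∑ j, G i j * m i j) + ∑ i, ∑ j, G j i * m i j := (hsum G).symm
    _ = (∑ i, ∑ j, G i j * m i j) + ∑ i, ∑ j, G i j * m i j := by rw [swap]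

end Expand
noncomputable def todaPhi {R A : Type*} [CommRing R] [Ring A] (φ : R →+* A) :
    Polynomial (Polynomial R) →+* Polynomial (Polynomial A) :=
  mapRingHom (mapRingHom φ)

section Key
variable {R A : Type*} [CommRing R] [Ring A] {n : ℕ}

lemma todaRepX (φ : R →+* A) (p : Polynomial R) :
    todaPhi φ (todaEX p) = C (p.map φ) := by
  simp [todaPhi, todaEX, coe_mapRingHom]

lemma todaRepY (φ : R →+* A) (p : Polynomial R) :
    todaPhi φ (todaEY p) = p.map ((C : A →+* Polynomial A).comp φ) := by
  have hcomp : (mapRingHom φ).comp (C : R →+* Polynomial R)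
      = (C : A →+* Polynomial A).comp φ := by ext r; simp
  simp [todaPhi, todaEY, coe_mapRingHom, Polynomial.map_map, hcomp]

lemma todaRepY' (φ : R →+* A) (p : Polynomial R) :
    todaPhi φ (todaEY p) = (p.map φ).map (C : A →+* Polynomial A) := by
  rw [todaRepY, ← Polynomial.map_map]

set_option maxHeartbeats 4000000 in
theorem toda_key (φ : R →+* A) (lam : Fin n → R) (hh : R) (mu muinv : Fin n → A)
    (σ : Fin n → R ≃+* R)
    (hσ : ∀ k l, σ k (lam l) = lam l + if k = l then hh else 0)
    (hσh : ∀ k, σ k hh = hh)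
    (hshift : ∀ (k : Fin n) (r : R), mu k * φ r = φ (σ k r) * mu k)
    (hmu : ∀ k l, mu k * mu l = mu l * mu k)
    (hmuinv : ∀ k, mu k * muinv k = 1 ∧ muinv k * mu k = 1)
    (hu0 : ∀ i j, i ≠ j → IsUnit (lam i - lam j))
    (hup : ∀ i j, i ≠ j → IsUnit (lam i - lam j + hh))
    (hum : ∀ i j, i ≠ j → IsUnit (lam i - lam j - hh))
    (h2 : IsUnit (2 : A))
    (T : Polynomial A)
    (hT : T = Polynomial.map φ (todaA lam) +
      ∑ i, Polynomial.map φ (todaC lam i) * C (mu i + muinv i)) :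
    Polynomial.map (C : A →+* Polynomial A) T * C T
      = C T * Polynomial.map (C : A →+* Polynomial A) T := by
  -- basic σ facts
  have hσi : ∀ i, σ i (lam i) = lam i + hh := fun i => by simpa using hσ i i
  have hσk : ∀ i k, k ≠ i → σ i (lam k) = lam k := fun i k hk => by
    simpa [(Ne.symm hk : i ≠ k)] using hσ i k
  have hσS : ∀ i, σ i (∑ k, lam k) = (∑ k, lam k) + hh := by
    intro i
    rw [map_sum, Finset.sum_congr rfl (fun l _ => hσ i l), Finset.sum_add_distrib,
      Finset.sum_ite_eq, if_pos (Finset.mem_univ i)]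
  have hσisymm : ∀ i, (σ i).symm (lam i) = lam i - hh := fun i => by
    have h : σ i (lam i - hh) = lam i := by rw [map_sub, hσi i, hσh]; ring
    conv_lhs => rw [← h]
    rw [RingEquiv.symm_apply_apply]
  have hσksymm : ∀ i k, k ≠ i → (σ i).symm (lam k) = lam k := fun i k hk => by
    conv_lhs => rw [← hσk i k hk]
    rw [RingEquiv.symm_apply_apply]
  have hσSsymm : ∀ i, (σ i).symm (∑ k, lam k) = (∑ k, lam k) - hh := fun i => by
    have h : σ i ((∑ k, lam k) - hh) = ∑ k, lam k := by rw [map_sub, hσS i, hσh]; ring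
    conv_lhs => rw [← h]
    rw [RingEquiv.symm_apply_apply]
  -- hypotheses for the plus family
  have Hfi : ∀ i, ((σ i : R →+* R)) (lam i) = lam i + hh := fun i => hσi i
  have Hfk : ∀ i k, k ≠ i → ((σ i : R →+* R)) (lam k) = lam k := fun i k hk => hσk i k hk
  have Hfinv : ∀ (i) (r : R), ((σ i : R →+* R)) (Ring.inverse r)
      = Ring.inverse (((σ i : R →+* R)) r) := fun i r => toda_equiv_ringInverse (σ i) r
  have HfS : ∀ i, ((σ i : R →+* R)) (∑ k, lam k) = (∑ k, lam k) + hh := fun i => hσS i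
  -- hypotheses for the minus family
  have Hgi : ∀ i, (((σ i).symm : R →+* R)) (lam i) = lam i - hh := fun i => hσisymm i
  have Hgi' : ∀ i, (((σ i).symm : R →+* R)) (lam i) = lam i + -hh := fun i => by
    rw [Hgi i, sub_eq_add_neg]
  have Hgk : ∀ i k, k ≠ i → (((σ i).symm : R →+* R)) (lam k) = lam k :=
    fun i k hk => hσksymm i k hk
  have Hginv : ∀ (i) (r : R), (((σ i).symm : R →+* R)) (Ring.inverse r)
      = Ring.inverse ((((σ i).symm : R →+* R)) r) := fun i r => toda_equiv_ringInverse (σ i).symm r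
  have HgS : ∀ i, (((σ i).symm : R →+* R)) (∑ k, lam k) = (∑ k, lam k) + -hh := fun i => by
    have h := hσSsymm i
    rw [sub_eq_add_neg] at h
    exact h
  -- unit variants
  have hum' : ∀ i j, i ≠ j → IsUnit (lam i - lam j - -hh) := fun i j h => by
    rw [sub_neg_eq_add]; exact hup i j h
  -- A-level derived relations
  have hshift' : ∀ (k : Fin n) (r : R), muinv k * φ r = φ ((σ k).symm r) * muinv k := by
    intro k r
    have h1 : mu k * φ ((σ k).symm r) = φ r * mu k := by
      rw [hshift k ((σ k).symm r), RingEquiv.apply_symm_apply]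
    calc muinv k * φ r = muinv k * (φ r * (mu k * muinv k)) := by
          rw [(hmuinv k).1, mul_one]
      _ = muinv k * (φ r * mu k) * muinv k := by noncomm_ring
      _ = muinv k * (mu k * φ ((σ k).symm r)) * muinv k := by rw [h1]
      _ = (muinv k * mu k) * (φ ((σ k).symm r) * muinv k) := by noncomm_ring
      _ = φ ((σ k).symm r) * muinv k := by rw [(hmuinv k).2, one_mul]
  have hmixed : ∀ i j, mu i * muinv j = muinv j * mu i := by
    intro i j
    calc mu i * muinv j = (muinv j * mu j) * (mu i * muinv j) := by rw [(hmuinv j).2, one_mul]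
      _ = muinv j * ((mu j * mu i) * muinv j) := by noncomm_ring
      _ = muinv j * ((mu i * mu j) * muinv j) := by rw [hmu j i]
      _ = (muinv j * mu i) * (mu j * muinv j) := by noncomm_ring
      _ = muinv j * mu i := by rw [(hmuinv j).1, mul_one]
  have hinvinv : ∀ i j, muinv i * muinv j = muinv j * muinv i := by
    intro i j
    calc muinv i * muinv j = muinv i * muinv j * (mu i * muinv i) := by
          rw [(hmuinv i).1, mul_one]
      _ = muinv i * ((muinv j * mu i) * muinv i) := by noncomm_ring
      _ = muinv i * ((mu i * muinv j) * muinv i) := by rw [hmixed i j]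
      _ = (muinv i * mu i) * (muinv j * muinv i) := by noncomm_ring
      _ = muinv j * muinv i := by rw [(hmuinv i).2, one_mul]
  -- commutation lemmas in the double polynomial ring
  have hcvX : ∀ (k : Fin n) (q : Polynomial R),
      C (C (mu k)) * todaPhi φ (todaEX q)
      = todaPhi φ (todaEX ((mapRingHom (σ k : R →+* R)) q)) * C (C (mu k)) := by
    intro k q
    rw [todaRepX, todaRepX, ← map_mul, ← map_mul]
    exact congrArg C (by
      simpa [coe_mapRingHom] using toda_Cmul_comm φ (σ k : R →+* R) (mu k) (hshift k) q)
  have hcvX' : ∀ (k : Fin n) (q : Polynomial R),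
      C (C (muinv k)) * todaPhi φ (todaEX q)
      = todaPhi φ (todaEX ((mapRingHom ((σ k).symm : R →+* R)) q)) * C (C (muinv k)) := by
    intro k q
    rw [todaRepX, todaRepX, ← map_mul, ← map_mul]
    exact congrArg C (by
      simpa [coe_mapRingHom] using toda_Cmul_comm φ ((σ k).symm : R →+* R) (muinv k) (hshift' k) q)
  have hcvY : ∀ (k : Fin n) (q : Polynomial R),
      C (C (mu k)) * todaPhi φ (todaEY q)
      = todaPhi φ (todaEY ((mapRingHom (σ k : R →+* R)) q)) * C (C (mu k)) := by
    intro k q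
    rw [todaRepY, todaRepY]
    simpa [coe_mapRingHom] using
      toda_Cmul_comm ((C : A →+* Polynomial A).comp φ) (σ k : R →+* R) (C (mu k))
        (fun r => by
          simp only [RingHom.comp_apply]
          rw [← map_mul, ← map_mul, hshift k r]
          rfl) q
  have hcvY' : ∀ (k : Fin n) (q : Polynomial R),
      C (C (muinv k)) * todaPhi φ (todaEY q)
      = todaPhi φ (todaEY ((mapRingHom ((σ k).symm : R →+* R)) q)) * C (C (muinv k)) := by
    intro k q
    rw [todaRepY, todaRepY]
    simpa [coe_mapRingHom] using
      toda_Cmul_comm ((C : A →+* Polynomial A).comp φ) ((σ k).symm : R →+* R) (C (muinv k))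
        (fun r => by
          simp only [RingHom.comp_apply]
          rw [← map_mul, ← map_mul, hshift' k r]
          rfl) q
  -- representation of the two copies of T
  have hTm : Polynomial.map (C : A →+* Polynomial A) T
      = todaPhi φ (todaEY (todaA lam))
        + ∑ i, todaPhi φ (todaEY (todaC lam i)) * (C (C (mu i)) + C (C (muinv i))) := by
    rw [hT, Polynomial.map_add, Polynomial.map_sum]
    rw [todaRepY']
    congr 1
    refine Finset.sum_congr rfl fun i _ => ?_
    rw [Polynomial.map_mul, todaRepY', Polynomial.map_C, map_add, map_add]
  have hQm : (C T : Polynomial (Polynomial A))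
      = todaPhi φ (todaEX (todaA lam))
        + ∑ i, todaPhi φ (todaEX (todaC lam i)) * (C (C (mu i)) + C (C (muinv i))) := by
    rw [hT, map_add, map_sum, todaRepX]
    congr 1
    refine Finset.sum_congr rfl fun i _ => ?_
    rw [map_mul, todaRepX, map_add, map_add]
  rw [hTm, hQm,
    todaExpand (todaPhi φ) todaEY todaEX (fun k => C (C (mu k))) (fun k => C (C (muinv k)))
      (fun k => mapRingHom (σ k : R →+* R)) (fun k => mapRingHom ((σ k).symm : R →+* R))
      hcvX hcvX' (todaA lam) (todaC lam),
    todaExpand (todaPhi φ) todaEX todaEY (fun k => C (C (mu k))) (fun k => C (C (muinv k)))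
      (fun k => mapRingHom (σ k : R →+* R)) (fun k => mapRingHom ((σ k).symm : R →+* R))
      hcvY hcvY' (todaA lam) (todaC lam)]
  simp only [coe_mapRingHom]
  -- group equalities
  have hg0 : todaPhi φ (todaEY (todaA lam) * todaEX (todaA lam))
      = todaPhi φ (todaEX (todaA lam) * todaEY (todaA lam)) := by rw [mul_comm]
  have hg1 : (∑ i, todaPhi φ (todaEY (todaA lam) * todaEX (todaC lam i)
        + todaEY (todaC lam i) * todaEX ((todaA lam).map (σ i : R →+* R))) * C (C (mu i)))
      = ∑ i, todaPhi φ (todaEX (todaA lam) * todaEY (todaC lam i)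
        + todaEX (todaC lam i) * todaEY ((todaA lam).map (σ i : R →+* R))) * C (C (mu i)) :=
    Finset.sum_congr rfl fun i _ => by
      rw [todaWI2 lam Hfi Hfk Hfinv HfS i]
  have hg2 : (∑ i, todaPhi φ (todaEY (todaA lam) * todaEX (todaC lam i)
        + todaEY (todaC lam i) * todaEX ((todaA lam).map ((σ i).symm : R →+* R))) * C (C (muinv i)))
      = ∑ i, todaPhi φ (todaEX (todaA lam) * todaEY (todaC lam i)
        + todaEX (todaC lam i) * todaEY ((todaA lam).map ((σ i).symm : R →+* R))) * C (C (muinv i)) :=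
    Finset.sum_congr rfl fun i _ => by
      rw [todaWI2 lam Hgi' Hgk Hginv HgS i]
  have h2B : IsUnit (2 : Polynomial (Polynomial A)) := by
    have h := h2.map ((C : Polynomial A →+* Polynomial (Polynomial A)).comp (C : A →+* Polynomial A))
    rwa [RingHom.comp_apply, map_ofNat, map_ofNat] at h
  have hg3 : (∑ i, ∑ j, todaPhi φ (todaEY (todaC lam i)
        * todaEX ((todaC lam j).map (σ i : R →+* R))) * (C (C (mu i)) * C (C (mu j))))
      = ∑ i, ∑ j, todaPhi φ (todaEX (todaC lam i)
        * todaEY ((todaC lam j).map (σ i : R →+* R))) * (C (C (mu i)) * C (C (mu j))) := by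
    refine todaSwap _ _ _ (fun i j => by rw [← map_mul, ← map_mul, hmu i j, map_mul, map_mul])
      (fun i j => ?_) h2B
    rw [← map_add, ← map_add]
    exact congrArg _ (todaWI4 lam Hfi Hfk Hfinv hu0 hum i j)
  have hg6 : (∑ i, ∑ j, todaPhi φ (todaEY (todaC lam i)
        * todaEX ((todaC lam j).map ((σ i).symm : R →+* R))) * (C (C (muinv i)) * C (C (muinv j))))
      = ∑ i, ∑ j, todaPhi φ (todaEX (todaC lam i)
        * todaEY ((todaC lam j).map ((σ i).symm : R →+* R))) * (C (C (muinv i)) * C (C (muinv j))) := by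
    refine todaSwap _ _ _
      (fun i j => by rw [← map_mul, ← map_mul, hinvinv i j, map_mul, map_mul])
      (fun i j => ?_) h2B
    rw [← map_add, ← map_add]
    exact congrArg _ (todaWI4 lam (dd := -hh) Hgi' Hgk Hginv hu0 hum' i j)
  -- the mixed groups
  have hmixB : ∀ i j, (C (C (muinv j)) : Polynomial (Polynomial A)) * C (C (mu i))
      = C (C (mu i)) * C (C (muinv j)) := fun i j => by
    rw [← map_mul, ← map_mul, ← hmixed i j, map_mul, map_mul]
  have reindex : ∀ u v : Polynomial R →+* Polynomial (Polynomial R),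
      (∑ i, ∑ j, todaPhi φ (u (todaC lam i)
        * v ((todaC lam j).map ((σ i).symm : R →+* R))) * (C (C (muinv i)) * C (C (mu j))))
      = ∑ i, ∑ j, todaPhi φ (u (todaC lam j)
        * v ((todaC lam i).map ((σ j).symm : R →+* R))) * (C (C (mu i)) * C (C (muinv j))) := by
    intro u v
    rw [Finset.sum_comm]
    exact Finset.sum_congr rfl fun i _ => Finset.sum_congr rfl fun j _ => by rw [hmixB]
  have merge : ∀ u v : Polynomial R →+* Polynomial (Polynomial R),
      ((∑ i, ∑ j, todaPhi φ (u (todaC lam i)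
          * v ((todaC lam j).map (σ i : R →+* R))) * (C (C (mu i)) * C (C (muinv j))))
        + ∑ i, ∑ j, todaPhi φ (u (todaC lam j)
          * v ((todaC lam i).map ((σ j).symm : R →+* R))) * (C (C (mu i)) * C (C (muinv j))))
      = ∑ i, ∑ j, todaPhi φ (u (todaC lam i) * v ((todaC lam j).map (σ i : R →+* R))
          + u (todaC lam j) * v ((todaC lam i).map ((σ j).symm : R →+* R)))
          * (C (C (mu i)) * C (C (muinv j))) := by
    intro u v
    rw [← Finset.sum_add_distrib]
    refine Finset.sum_congr rfl fun i _ => ?_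
    rw [← Finset.sum_add_distrib]
    exact Finset.sum_congr rfl fun j _ => by rw [← add_mul, ← map_add]
  have hg45 : ((∑ i, ∑ j, todaPhi φ (todaEY (todaC lam i)
        * todaEX ((todaC lam j).map (σ i : R →+* R))) * (C (C (mu i)) * C (C (muinv j))))
      + ∑ i, ∑ j, todaPhi φ (todaEY (todaC lam i)
        * todaEX ((todaC lam j).map ((σ i).symm : R →+* R))) * (C (C (muinv i)) * C (C (mu j))))
      = (∑ i, ∑ j, todaPhi φ (todaEX (todaC lam i)
        * todaEY ((todaC lam j).map (σ i : R →+* R))) * (C (C (mu i)) * C (C (muinv j))))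
      + ∑ i, ∑ j, todaPhi φ (todaEX (todaC lam i)
        * todaEY ((todaC lam j).map ((σ i).symm : R →+* R))) * (C (C (muinv i)) * C (C (mu j))) := by
    rw [reindex todaEY todaEX, reindex todaEX todaEY, merge todaEY todaEX, merge todaEX todaEY]
    refine Finset.sum_congr rfl fun i _ => Finset.sum_congr rfl fun j _ => ?_
    exact congrArg (· * (C (C (mu i)) * C (C (muinv j))))
      (congrArg (todaPhi φ) (todaWI5 lam Hfi Hfk Hfinv Hgi Hgk Hginv hu0 hum hup i j))
  -- final assembly
  calc todaPhi φ (todaEY (todaA lam) * todaEX (todaA lam))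
      + (∑ i, todaPhi φ (todaEY (todaA lam) * todaEX (todaC lam i)
          + todaEY (todaC lam i) * todaEX ((todaA lam).map (σ i : R →+* R))) * C (C (mu i)))
      + (∑ i, todaPhi φ (todaEY (todaA lam) * todaEX (todaC lam i)
          + todaEY (todaC lam i) * todaEX ((todaA lam).map ((σ i).symm : R →+* R))) * C (C (muinv i)))
      + (∑ i, ∑ j, todaPhi φ (todaEY (todaC lam i)
          * todaEX ((todaC lam j).map (σ i : R →+* R))) * (C (C (mu i)) * C (C (mu j))))
      + (∑ i, ∑ j, todaPhi φ (todaEY (todaC lam i)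
          * todaEX ((todaC lam j).map (σ i : R →+* R))) * (C (C (mu i)) * C (C (muinv j))))
      + (∑ i, ∑ j, todaPhi φ (todaEY (todaC lam i)
          * todaEX ((todaC lam j).map ((σ i).symm : R →+* R))) * (C (C (muinv i)) * C (C (mu j))))
      + (∑ i, ∑ j, todaPhi φ (todaEY (todaC lam i)
          * todaEX ((todaC lam j).map ((σ i).symm : R →+* R))) * (C (C (muinv i)) * C (C (muinv j))))
      = (todaPhi φ (todaEY (todaA lam) * todaEX (todaA lam))
        + (∑ i, todaPhi φ (todaEY (todaA lam) * todaEX (todaC lam i)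
            + todaEY (todaC lam i) * todaEX ((todaA lam).map (σ i : R →+* R))) * C (C (mu i)))
        + (∑ i, todaPhi φ (todaEY (todaA lam) * todaEX (todaC lam i)
            + todaEY (todaC lam i) * todaEX ((todaA lam).map ((σ i).symm : R →+* R))) * C (C (muinv i)))
        + (∑ i, ∑ j, todaPhi φ (todaEY (todaC lam i)
            * todaEX ((todaC lam j).map (σ i : R →+* R))) * (C (C (mu i)) * C (C (mu j))))
        + (∑ i, ∑ j, todaPhi φ (todaEY (todaC lam i)
            * todaEX ((todaC lam j).map ((σ i).symm : R →+* R))) * (C (C (muinv i)) * C (C (muinv j)))))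
      + ((∑ i, ∑ j, todaPhi φ (todaEY (todaC lam i)
            * todaEX ((todaC lam j).map (σ i : R →+* R))) * (C (C (mu i)) * C (C (muinv j))))
        + ∑ i, ∑ j, todaPhi φ (todaEY (todaC lam i)
            * todaEX ((todaC lam j).map ((σ i).symm : R →+* R))) * (C (C (muinv i)) * C (C (mu j)))) := by
        abel
    _ = (todaPhi φ (todaEX (todaA lam) * todaEY (todaA lam))
        + (∑ i, todaPhi φ (todaEX (todaA lam) * todaEY (todaC lam i)
            + todaEX (todaC lam i) * todaEY ((todaA lam).map (σ i : R →+* R))) * C (C (mu i)))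
        + (∑ i, todaPhi φ (todaEX (todaA lam) * todaEY (todaC lam i)
            + todaEX (todaC lam i) * todaEY ((todaA lam).map ((σ i).symm : R →+* R))) * C (C (muinv i)))
        + (∑ i, ∑ j, todaPhi φ (todaEX (todaC lam i)
            * todaEY ((todaC lam j).map (σ i : R →+* R))) * (C (C (mu i)) * C (C (mu j))))
        + (∑ i, ∑ j, todaPhi φ (todaEX (todaC lam i)
            * todaEY ((todaC lam j).map ((σ i).symm : R →+* R))) * (C (C (muinv i)) * C (C (muinv j)))))
      + ((∑ i, ∑ j, todaPhi φ (todaEX (todaC lam i)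
            * todaEY ((todaC lam j).map (σ i : R →+* R))) * (C (C (mu i)) * C (C (muinv j))))
        + ∑ i, ∑ j, todaPhi φ (todaEX (todaC lam i)
            * todaEY ((todaC lam j).map ((σ i).symm : R →+* R))) * (C (C (muinv i)) * C (C (mu j)))) := by
        rw [hg0, hg1, hg2, hg3, hg6, hg45]
    _ = todaPhi φ (todaEX (todaA lam) * todaEY (todaA lam))
      + (∑ i, todaPhi φ (todaEX (todaA lam) * todaEY (todaC lam i)
          + todaEX (todaC lam i) * todaEY ((todaA lam).map (σ i : R →+* R))) * C (C (mu i)))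
      + (∑ i, todaPhi φ (todaEX (todaA lam) * todaEY (todaC lam i)
          + todaEX (todaC lam i) * todaEY ((todaA lam).map ((σ i).symm : R →+* R))) * C (C (muinv i)))
      + (∑ i, ∑ j, todaPhi φ (todaEX (todaC lam i)
          * todaEY ((todaC lam j).map (σ i : R →+* R))) * (C (C (mu i)) * C (C (mu j))))
      + (∑ i, ∑ j, todaPhi φ (todaEX (todaC lam i)
          * todaEY ((todaC lam j).map (σ i : R →+* R))) * (C (C (mu i)) * C (C (muinv j))))
      + (∑ i, ∑ j, todaPhi φ (todaEX (todaC lam i)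
          * todaEY ((todaC lam j).map ((σ i).symm : R →+* R))) * (C (C (muinv i)) * C (C (mu j))))
      + (∑ i, ∑ j, todaPhi φ (todaEX (todaC lam i)
          * todaEY ((todaC lam j).map ((σ i).symm : R →+* R))) * (C (C (muinv i)) * C (C (muinv j)))) := by
        abel

end Key

/-- Quantum commuting Hamiltonians: the operator coefficients `H_j` (`0 ≤ j ≤ n−1`)
of `t(λ) = (λ + Σ λ_i) ∏ (λ − λ_i) + Σ_i ∏_{j≠i} (λ − λ_j)(λ_i − λ_j)⁻¹ (μ_i + μ_i⁻¹)`
(with all μ-factors on the right and λ a formal central variable) pairwise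
commute, for operators satisfying `μ_k λ_l = (λ_l + iħ δ_{kl}) μ_k`,
`[λ_k,λ_l] = [μ_k,μ_l] = 0`, the λ's generating a commutative subalgebra `R`
in which all `λ_i − λ_j + m iħ` (`i ≠ j`, `|m| ≤ 1`) are invertible. -/
theorem toda_quantum_hamiltonians_commute (n : ℕ) (R A : Type*) [CommRing R]
    [Algebra ℂ R] [Ring A] [Algebra ℂ A]
    (φ : R →ₐ[ℂ] A) (hbar : ℂ) (hhbar : hbar ≠ 0)
    (lam : Fin n → R) (mu muinv : Fin n → A) (σ : Fin n → (R ≃ₐ[ℂ] R))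
    (hσ : ∀ k l : Fin n, σ k (lam l) =
      lam l + if k = l then algebraMap ℂ R (Complex.I * hbar) else 0)
    (hshift : ∀ (k : Fin n) (r : R), mu k * φ r = φ (σ k r) * mu k)
    (hmu : ∀ k l : Fin n, mu k * mu l = mu l * mu k)
    (hmuinv : ∀ k : Fin n, mu k * muinv k = 1 ∧ muinv k * mu k = 1)
    (hinv : ∀ i j : Fin n, i ≠ j → ∀ m : ℤ, m.natAbs ≤ 1 →
      IsUnit (lam i - lam j + m • algebraMap ℂ R (Complex.I * hbar)))
    (T : Polynomial A)
    (hT : T = Polynomial.map (φ : R →+* A)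
        ((X + C (∑ i, lam i)) * ∏ i, (X - C (lam i))) +
      ∑ i, Polynomial.map (φ : R →+* A)
          (∏ j ∈ univ.erase i, ((X - C (lam j)) * C (Ring.inverse (lam i - lam j)))) *
        C (mu i + muinv i)) :
    ∀ i j : ℕ, i < n → j < n → T.coeff i * T.coeff j = T.coeff j * T.coeff i := by
  set hh : R := algebraMap ℂ R (Complex.I * hbar) with hhdef
  have hu0 : ∀ i j, i ≠ j → IsUnit (lam i - lam j) := by
    intro i j hij
    have := hinv i j hij 0 (by norm_num)
    simpa using this
  have hup : ∀ i j, i ≠ j → IsUnit (lam i - lam j + hh) := by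
    intro i j hij
    have := hinv i j hij 1 (by norm_num)
    simpa using this
  have hum : ∀ i j, i ≠ j → IsUnit (lam i - lam j - hh) := by
    intro i j hij
    have := hinv i j hij (-1) (by norm_num)
    simpa [neg_smul, sub_eq_add_neg] using this
  have h2 : IsUnit (2 : A) := by
    have h2C : IsUnit (2 : ℂ) := isUnit_iff_ne_zero.mpr two_ne_zero
    simpa [map_ofNat] using h2C.map (algebraMap ℂ A)
  have key := toda_key (n := n) (φ : R →+* A) lam hh mu muinv
    (fun k => (σ k).toRingEquiv)
    (fun k l => hσ k l)
    (fun k => (σ k).commutes (Complex.I * hbar))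
    (fun k r => hshift k r) hmu hmuinv hu0 hup hum h2 T
    (by rw [hT]; rfl)
  intro i j _ _
  have h := congrArg (fun p : Polynomial (Polynomial A) => (p.coeff i).coeff j) key
  simpa [coeff_mul_C, coeff_C_mul, coeff_map] using h
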